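/- Let a>0, b>0, d>0, m>1 with a>2d, and let T>0 and y∈C⁰([0,T]) be nonnegative and satisfy y(t) ≥ a + b ∫₀ᵗ (y(s)-d)₊^m ds for all t∈[0,T]. Then T < 2^m / ((m-1) b a^{m-1}). -/

import Mathlib

open MeasureTheory Real Set Filter

theorem stmt5 (a b d m T : ℝ) (ha : 0 < a) (hb : 0 < b) (hd : 0 < d) (hm : 1 < m)
    (had : 2 * d < a) (hT : 0 < T) (y : ℝ → ℝ)
    (hy : ContinuousOn y (Set.Icc 0 T))
    (hy0 : ∀ t ∈ Set.Icc 0 T, 0 ≤ y t)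
    (hineq : ∀ t ∈ Set.Icc 0 T,
      a + b * ∫ s in (0:ℝ)..t, (max (y s - d) 0) ^ m ≤ y t) :
    T < 2 ^ m / ((m - 1) * b * a ^ (m - 1)) := by
  have hm0 : (0:ℝ) ≤ m := by linarith
  have hm1 : (0:ℝ) < m - 1 := by linarith
  -- continuous extension of y to all of ℝ
  set Y : ℝ → ℝ := fun s => y (max 0 (min s T)) with hYdef
  have hYmem : ∀ s : ℝ, max 0 (min s T) ∈ Icc (0:ℝ) T := by
    intro s
    exact ⟨le_max_left _ _, max_le hT.le (min_le_right _ _)⟩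
  have hYcont : Continuous Y := by
    exact hy.comp_continuous (continuous_const.max (continuous_id.min continuous_const)) hYmem
  have hYeq : ∀ s ∈ Icc (0:ℝ) T, Y s = y s := by
    intro s hs
    simp [hYdef, min_eq_left hs.2, max_eq_right hs.1]
  set g : ℝ → ℝ := fun s => b * (max (Y s - d) 0) ^ m with hgdef
  have hgcont : Continuous g :=
    continuous_const.mul (((hYcont.sub continuous_const).max continuous_const).rpow_const
      (fun x => Or.inr hm0))
  have hgnn : ∀ s, 0 ≤ g s := by
    intro s
    exact mul_nonneg hb.le (Real.rpow_nonneg (le_max_right _ _) m)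
  set F : ℝ → ℝ := fun t => a + ∫ s in (0:ℝ)..t, g s with hFdef
  have hFeq : ∀ t ∈ Icc (0:ℝ) T,
      F t = a + b * ∫ s in (0:ℝ)..t, (max (y s - d) 0) ^ m := by
    intro t ht
    have : ∫ s in (0:ℝ)..t, g s = b * ∫ s in (0:ℝ)..t, (max (y s - d) 0) ^ m := by
      rw [← intervalIntegral.integral_const_mul]
      apply intervalIntegral.integral_congr
      intro s hs
      rw [uIcc_of_le ht.1] at hs
      have hs' : s ∈ Icc (0:ℝ) T := ⟨hs.1, hs.2.trans ht.2⟩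
      simp [hgdef, hYeq s hs']
    simp [hFdef, this]
  have hFge : ∀ t ∈ Icc (0:ℝ) T, a ≤ F t := by
    intro t ht
    have : 0 ≤ ∫ s in (0:ℝ)..t, g s :=
      intervalIntegral.integral_nonneg ht.1 (fun s _ => hgnn s)
    simp only [hFdef]; linarith
  have hFpos : ∀ t ∈ Icc (0:ℝ) T, 0 < F t := fun t ht => ha.trans_le (hFge t ht)
  have hyF : ∀ t ∈ Icc (0:ℝ) T, F t ≤ y t := by
    intro t ht
    rw [hFeq t ht]; exact hineq t ht
  have hFderiv : ∀ t : ℝ, HasDerivAt F (g t) t := by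
    intro t
    exact ((hgcont.integral_hasStrictDerivAt 0 t).hasDerivAt).const_add a
  -- the function φ = F ^ (1 - m)
  set φ : ℝ → ℝ := fun t => F t ^ (1 - m) with hφdef
  have hφderiv : ∀ t ∈ Icc (0:ℝ) T,
      HasDerivAt φ (g t * (1 - m) * F t ^ (1 - m - 1)) t := by
    intro t ht
    exact (hFderiv t).rpow_const (Or.inl (ne_of_gt (hFpos t ht)))
  set C : ℝ := (1 - m) * (b / 2 ^ m) with hCdef
  have hbound : ∀ x ∈ interior (Icc (0:ℝ) T), deriv φ x ≤ C := by
    intro x hx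
    rw [interior_Icc] at hx
    have hx' : x ∈ Icc (0:ℝ) T := Ioo_subset_Icc_self hx
    rw [(hφderiv x hx').deriv]
    have hu : 0 < F x := hFpos x hx'
    have hFm : 0 < F x ^ m := Real.rpow_pos_of_pos hu m
    have h2m : (0:ℝ) < 2 ^ m := Real.rpow_pos_of_pos (by norm_num) m
    have hYx : Y x = y x := hYeq x hx'
    have hyx : F x ≤ y x := hyF x hx'
    have hdy : 2 * d < y x := lt_of_lt_of_le (had.trans_le (hFge x hx')) hyx
    have hmax : max (Y x - d) 0 = y x - d := by rw [hYx]; exact max_eq_left (by linarith)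
    have hle : F x / 2 ≤ max (Y x - d) 0 := by
      rw [hmax]
      clear_value F Y g φ C
      linarith
    have h1 : (F x / 2) ^ m ≤ (max (Y x - d) 0) ^ m :=
      Real.rpow_le_rpow (by positivity) hle hm0
    have h3 : b * (F x ^ m / 2 ^ m) ≤ g x := by
      have : (F x / 2) ^ m = F x ^ m / 2 ^ m :=
        Real.div_rpow hu.le (by norm_num) m
      rw [← this]
      exact mul_le_mul_of_nonneg_left h1 hb.le
    have hexp : F x ^ (1 - m - 1) = (F x ^ m)⁻¹ := by
      rw [show (1 - m - 1 : ℝ) = -m by ring, Real.rpow_neg hu.le]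
    rw [hexp]
    have hneg : (1 - m) * (F x ^ m)⁻¹ ≤ 0 := by
      apply mul_nonpos_of_nonpos_of_nonneg (by linarith) (by positivity)
    calc g x * (1 - m) * (F x ^ m)⁻¹
        = ((1 - m) * (F x ^ m)⁻¹) * g x := by ring
      _ ≤ ((1 - m) * (F x ^ m)⁻¹) * (b * (F x ^ m / 2 ^ m)) :=
          mul_le_mul_of_nonpos_left h3 hneg
      _ = C := by
          field_simp [hCdef]
          rw [hCdef]; field_simp
  have hφcont : ContinuousOn φ (Icc (0:ℝ) T) := fun t ht =>
    ((hφderiv t ht).differentiableAt.continuousAt).continuousWithinAt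
  have hφdiff : DifferentiableOn ℝ φ (interior (Icc (0:ℝ) T)) := by
    intro t ht
    rw [interior_Icc] at ht
    exact ((hφderiv t (Ioo_subset_Icc_self ht)).differentiableAt).differentiableWithinAt
  have key := (convex_Icc (0:ℝ) T).image_sub_le_mul_sub_of_deriv_le hφcont hφdiff hbound
    0 ⟨le_rfl, hT.le⟩ T ⟨hT.le, le_rfl⟩ hT.le
  -- compute φ 0 and use φ T > 0
  have hφ0 : φ 0 = a ^ (1 - m) := by
    simp [hφdef, hFdef, intervalIntegral.integral_same]
  have hφT : 0 < φ T := Real.rpow_pos_of_pos (hFpos T ⟨hT.le, le_rfl⟩) _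
  have ha1m : a ^ (1 - m) = (a ^ (m - 1))⁻¹ := by
    rw [show (1 - m : ℝ) = -(m - 1) by ring, Real.rpow_neg ha.le]
  have hA : 0 < a ^ (m - 1) := Real.rpow_pos_of_pos ha _
  have hP : (0:ℝ) < 2 ^ m := Real.rpow_pos_of_pos (by norm_num) m
  rw [hφ0, ha1m] at key
  -- key : φ T - (a ^ (m-1))⁻¹ ≤ C * (T - 0)
  have hmain : (m - 1) * b * T < (a ^ (m - 1))⁻¹ * 2 ^ m := by
    have h4 : (m - 1) * (b / 2 ^ m) * T < (a ^ (m - 1))⁻¹ := by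
      have : C * (T - 0) = -((m - 1) * (b / 2 ^ m) * T) := by rw [hCdef]; ring
      rw [this] at key
      linarith
    have h5 : ((m - 1) * b * T) / 2 ^ m < (a ^ (m - 1))⁻¹ := by
      rw [div_lt_iff₀ hP] at *
      calc (m - 1) * b * T = (m - 1) * (b / 2 ^ m) * T * 2 ^ m := by
            field_simp
        _ < (a ^ (m - 1))⁻¹ * 2 ^ m := mul_lt_mul_of_pos_right h4 hP
      -- fallback
    calc (m - 1) * b * T = ((m - 1) * b * T) / 2 ^ m * 2 ^ m := by field_simp
      _ < (a ^ (m - 1))⁻¹ * 2 ^ m := mul_lt_mul_of_pos_right h5 hP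
  rw [lt_div_iff₀ (by positivity : (0:ℝ) < (m - 1) * b * a ^ (m - 1))]
  calc T * ((m - 1) * b * a ^ (m - 1)) = ((m - 1) * b * T) * a ^ (m - 1) := by ring
    _ < ((a ^ (m - 1))⁻¹ * 2 ^ m) * a ^ (m - 1) := mul_lt_mul_of_pos_right hmain hA
    _ = 2 ^ m := by field_simp
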